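/- For any natural numbers n ≥ 1 and b ≥ 1, the Dedekind sum s(2n²b² + 2nb + 1, 2nb²) equals (2n²b² − 3nb² + 1)/(12nb²). -/

import Mathlib

/-- The sawtooth function `((x))`: zero on integers, else `x - ⌊x⌋ - 1/2`. -/
def saw (x : ℚ) : ℚ := if x = ⌊x⌋ then 0 else x - ⌊x⌋ - 1/2

/-- The Dedekind sum `s(p,q) = ∑_{i=1}^{|q|} ((i/q)) ((p i/q))`. -/
noncomputable def dedekindSum (p q : ℤ) : ℚ :=
  ∑ i ∈ Finset.Icc (1 : ℤ) |q|, saw ((i : ℚ) / (q : ℚ)) * saw ((p : ℚ) * (i : ℚ) / (q : ℚ))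

lemma saw_zero : saw 0 = 0 := by simp [saw]
lemma saw_one : saw 1 = 0 := by norm_num [saw]

lemma saw_eq {x : ℚ} (h0 : 0 < x) (h1 : x < 1) : saw x = x - 1/2 := by
  have hf : ⌊x⌋ = 0 := Int.floor_eq_zero_iff.2 ⟨le_of_lt h0, h1⟩
  rw [saw, hf]
  rw [if_neg (by push_cast; exact ne_of_gt h0)]
  push_cast; ring

lemma saw_add_int (x : ℚ) (k : ℤ) : saw (x + k) = saw x := by
  unfold saw
  rw [Int.floor_add_intCast]
  rcases eq_or_ne x (⌊x⌋ : ℚ) with h | h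
  · rw [if_pos (by push_cast; linarith), if_pos h]
  · rw [if_neg (by push_cast; intro hc; apply h; linarith), if_neg h]
    push_cast; ring

lemma saw_add_nat (x : ℚ) (k : ℕ) : saw (x + k) = saw x := by
  have := saw_add_int x k
  push_cast at this
  exact this

set_option maxHeartbeats 1000000 in
lemma term_eval (n b m r : ℕ) (hn : 1 ≤ n) (hb : 1 ≤ b) (hm : m < 2*n*b) (hr : r < b) :
    saw (((m*b+r : ℕ) : ℚ) / ((2*n*b*b : ℕ) : ℚ)) *
      saw (((n*(2*n*b*b)+2*n*b+1 : ℕ) : ℚ) * ((m*b+r : ℕ) : ℚ) / ((2*n*b*b : ℕ) : ℚ))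
    = (((m:ℚ)*b+r)/(2*(n:ℚ)*b*b) - 1/2) * (((m:ℚ)*b+r)/(2*(n:ℚ)*b*b) + (r:ℚ)/b - 1/2)
      - (if 2*n*b - 2*n*r ≤ m then (((m:ℚ)*b+r)/(2*(n:ℚ)*b*b) - 1/2) else 0)
      + (if m = 0 ∧ r = 0 then (-(1:ℚ)/4) else 0) := by
  have hnQ : (0:ℚ) < n := by exact_mod_cast hn
  have hbQ : (0:ℚ) < b := by exact_mod_cast hb
  have hmQ : (m:ℚ) < 2*n*b := by exact_mod_cast hm
  have hrQ : (r:ℚ) < b := by exact_mod_cast hr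
  have hQ : (0:ℚ) < 2*(n:ℚ)*b*b := by positivity
  have hbne : (b:ℚ) ≠ 0 := ne_of_gt hbQ
  have hQne : (2*(n:ℚ)*b*b) ≠ 0 := ne_of_gt hQ
  by_cases h00 : m = 0 ∧ r = 0
  · obtain ⟨hm0, hr0⟩ := h00
    subst hm0; subst hr0
    have hc : ¬ (2*n*b - 2*n*0 ≤ 0) := by
      simp only [Nat.mul_zero, Nat.sub_zero]
      omega
    rw [if_neg hc, if_pos ⟨rfl, rfl⟩]
    norm_num [saw_zero]
  -- i ≥ 1
  have hi1 : 1 ≤ m*b + r := by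
    rcases Nat.eq_zero_or_pos m with h | h
    · subst h; simp only [Nat.zero_mul, Nat.zero_add]
      rcases Nat.eq_zero_or_pos r with h' | h'
      · exact absurd ⟨rfl, h'⟩ h00
      · exact h'
    · calc 1 ≤ m := h
        _ ≤ m*b := Nat.le_mul_of_pos_right m hb
        _ ≤ m*b + r := Nat.le_add_right _ _
  have hiq : m*b + r < 2*n*b*b := by
    calc m*b + r < m*b + b := by omega
      _ = (m+1)*b := by ring
      _ ≤ (2*n*b)*b := Nat.mul_le_mul_right b hm
      _ = 2*n*b*b := by ring
  have hiQ : (0:ℚ) < (m:ℚ)*b + r := by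
    have : (1:ℚ) ≤ ((m*b+r : ℕ) : ℚ) := by exact_mod_cast hi1
    push_cast at this; linarith
  obtain ⟨v, hv⟩ : ∃ v : ℚ, v = ((m:ℚ)*b+r)/(2*(n:ℚ)*b*b) := ⟨_, rfl⟩
  rw [show (((m:ℚ)*b+r)/(2*(n:ℚ)*b*b) - 1/2) * (((m:ℚ)*b+r)/(2*(n:ℚ)*b*b) + (r:ℚ)/b - 1/2)
      - (if 2*n*b - 2*n*r ≤ m then (((m:ℚ)*b+r)/(2*(n:ℚ)*b*b) - 1/2) else 0)
      + (if m = 0 ∧ r = 0 then (-(1:ℚ)/4) else 0)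
      = (v - 1/2) * (v + (r:ℚ)/b - 1/2)
      - (if 2*n*b - 2*n*r ≤ m then (v - 1/2) else 0)
      + (if m = 0 ∧ r = 0 then (-(1:ℚ)/4) else 0) from by rw [hv]]
  have hv0 : 0 < v := by rw [hv]; exact div_pos hiQ hQ
  have hv1 : v < 1 := by
    rw [hv, div_lt_one hQ]
    have : ((m*b+r : ℕ) : ℚ) < ((2*n*b*b : ℕ) : ℚ) := by exact_mod_cast hiq
    push_cast at this; linarith
  -- first factor
  have hf1 : saw (((m*b+r : ℕ) : ℚ) / ((2*n*b*b : ℕ) : ℚ)) = v - 1/2 := by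
    have h : ((m*b+r : ℕ) : ℚ) / ((2*n*b*b : ℕ) : ℚ) = v := by rw [hv]; push_cast; ring_nf
    rw [h, saw_eq hv0 hv1]
  -- second factor reduction
  have harg : ((n*(2*n*b*b)+2*n*b+1 : ℕ) : ℚ) * ((m*b+r : ℕ) : ℚ) / ((2*n*b*b : ℕ) : ℚ)
      = (v + (r:ℚ)/b) + ((n*(m*b+r) + m : ℕ) : ℚ) := by
    rw [hv]; push_cast; field_simp; ring
  rw [hf1, harg, saw_add_nat]
  rw [if_neg h00, add_zero]
  obtain ⟨x2, hx2⟩ : ∃ x2 : ℚ, x2 = v + (r:ℚ)/b := ⟨_, rfl⟩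
  rw [← hx2]
  have hx2e : x2 = ((m:ℚ)*b + r + 2*n*b*r)/(2*(n:ℚ)*b*b) := by
    rw [hx2, hv]; field_simp
  by_cases hcond : 2*n*b - 2*n*r ≤ m
  · -- wrap-around case : 1 < x2 < 2
    rw [if_pos hcond]
    have hsub : 2*n*r ≤ 2*n*b := Nat.mul_le_mul_left (2*n) (le_of_lt hr)
    have hcondQ : 2*(n:ℚ)*b - 2*(n:ℚ)*r ≤ m := by
      have h := (Nat.cast_le (α := ℚ)).2 hcond
      rw [Nat.cast_sub hsub] at h
      push_cast at h
      linarith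
    have hr1 : 1 ≤ r := by
      rcases Nat.eq_zero_or_pos r with h | h
      · subst h
        simp only [Nat.mul_zero, Nat.sub_zero] at hcond
        omega
      · exact h
    have hr1Q : (1:ℚ) ≤ r := by exact_mod_cast hr1
    have hgt : 1 < x2 := by
      rw [hx2e, lt_div_iff₀ hQ]
      nlinarith [mul_le_mul_of_nonneg_right hcondQ (le_of_lt hbQ)]
    have hmQ' : (m:ℚ) ≤ 2*(n:ℚ)*b - 1 := by
      have h : m + 1 ≤ 2*n*b := hm
      have h2 := (Nat.cast_le (α := ℚ)).2 h
      push_cast at h2; linarith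
    have hrQ' : (r:ℚ) ≤ (b:ℚ) - 1 := by
      have h : r + 1 ≤ b := hr
      have h2 := (Nat.cast_le (α := ℚ)).2 h
      push_cast at h2; linarith
    have hlt : x2 < 2 := by
      rw [hx2e, div_lt_iff₀ hQ]
      have e1 := mul_le_mul_of_nonneg_right hmQ' hbQ.le
      have e2 := mul_le_mul_of_nonneg_left hrQ' (by positivity : (0:ℚ) ≤ 2*(n:ℚ)*b)
      have hn1 : (1:ℚ) ≤ n := by exact_mod_cast hn
      have hb1 : (1:ℚ) ≤ b := by exact_mod_cast hb
      have e3 : (1:ℚ) ≤ (n:ℚ)*b := by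
        calc (1:ℚ) = 1*1 := by ring
          _ ≤ (n:ℚ)*b := mul_le_mul hn1 hb1 (by norm_num) (by linarith)
      nlinarith [e1, e2, e3]
    have hsawx2 : saw x2 = x2 - 3/2 := by
      have h1 : saw ((x2 - 1) + ((1:ℤ) : ℚ)) = saw (x2 - 1) := saw_add_int (x2 - 1) 1
      have h2 : (x2 - 1) + ((1:ℤ) : ℚ) = x2 := by push_cast; ring
      rw [h2] at h1
      rw [h1, saw_eq (by linarith) (by linarith)]
      ring
    rw [hsawx2]; ring
  · -- no wrap: 0 < x2 < 1
    rw [if_neg hcond]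
    have hmlt : m + 2*n*r < 2*n*b := by omega
    have hnum : m*b + r + 2*n*b*r < 2*n*b*b := by
      calc m*b + r + 2*n*b*r = (m + 2*n*r)*b + r := by ring
        _ < (m + 2*n*r)*b + b := by omega
        _ = (m + 2*n*r + 1)*b := by ring
        _ ≤ (2*n*b)*b := Nat.mul_le_mul_right b (by omega)
        _ = 2*n*b*b := by ring
    have hx2lt : x2 < 1 := by
      rw [hx2e, div_lt_one hQ]
      have h : ((m*b + r + 2*n*b*r : ℕ) : ℚ) < ((2*n*b*b : ℕ) : ℚ) := by exact_mod_cast hnum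
      push_cast at h; linarith
    have hx2pos : 0 < x2 := by
      rw [hx2]
      have h : 0 ≤ (r:ℚ)/b := div_nonneg (Nat.cast_nonneg r) (le_of_lt hbQ)
      linarith
    rw [saw_eq hx2pos hx2lt]
    ring

lemma dedekindSum_eq_range (p : ℤ) (q : ℕ) (hq : 0 < q) :
    dedekindSum p q
      = ∑ i ∈ Finset.range q, saw ((i : ℚ) / (q : ℚ)) * saw ((p : ℚ) * (i : ℚ) / (q : ℚ)) := by
  unfold dedekindSum
  have habs : |(q : ℤ)| = (q : ℤ) := abs_of_pos (by exact_mod_cast hq)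
  rw [habs]
  set f : ℕ → ℚ := fun i => saw ((i : ℚ) / (q : ℚ)) * saw ((p : ℚ) * (i : ℚ) / (q : ℚ)) with hf
  have hmap : Finset.Icc (1 : ℤ) (q : ℤ)
      = (Finset.range q).map ⟨fun j : ℕ => (j : ℤ) + 1, (add_left_injective (1:ℤ)).comp Nat.cast_injective⟩ := by
    ext x
    simp only [Finset.mem_Icc, Finset.mem_map, Finset.mem_range, Function.Embedding.coeFn_mk]
    constructor
    · intro ⟨h1, h2⟩
      exact ⟨(x - 1).toNat, by omega, by omega⟩
    · rintro ⟨j, hj, rfl⟩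
      omega
  rw [hmap, Finset.sum_map]
  simp only [Function.Embedding.coeFn_mk]
  have hstep : ∀ j : ℕ, saw (((j : ℚ) + 1) / (q : ℚ)) *
      saw ((p : ℚ) * ((j : ℚ) + 1) / (q : ℚ)) = f (j + 1) := by
    intro j
    simp only [hf]
    push_cast
    ring_nf
  push_cast
  rw [Finset.sum_congr rfl (fun j _ => hstep j)]
  have hf0 : f 0 = 0 := by simp only [hf]; norm_num [saw_zero]
  have hq' : ((q : ℕ) : ℚ) ≠ 0 := by exact_mod_cast hq.ne'
  have hfq : f q = 0 := by
    simp only [hf]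
    rw [div_self hq', saw_one, zero_mul]
  have h1 := Finset.sum_range_succ' f q
  rw [Finset.sum_range_succ, hf0, hfq, add_zero, add_zero] at h1
  exact h1.symm

lemma sum_range_mul (g : ℕ → ℚ) (M B : ℕ) :
    ∑ i ∈ Finset.range (M * B), g i
      = ∑ m ∈ Finset.range M, ∑ r ∈ Finset.range B, g (m * B + r) := by
  induction M with
  | zero => simp
  | succ M ih =>
      rw [Finset.sum_range_succ, ← ih, Nat.succ_mul]
      rw [Finset.sum_range_add]

lemma sum_quad (a c d : ℚ) (k : ℕ) :
    ∑ m ∈ Finset.range k, (a * (m : ℚ) ^ 2 + c * m + d)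
      = a * (k * (k - 1) * (2 * k - 1) / 6) + c * (k * (k - 1) / 2) + d * k := by
  induction k with
  | zero => simp
  | succ k ih => rw [Finset.sum_range_succ, ih]; push_cast; ring

lemma filter_le_range (a M : ℕ) :
    (Finset.range M).filter (fun m => a ≤ m) = Finset.Ico a M := by
  ext x
  simp only [Finset.mem_filter, Finset.mem_range, Finset.mem_Ico]
  omega

set_option maxHeartbeats 1000000 in
lemma inner_eval (n b r : ℕ) (hn : 1 ≤ n) (hb : 1 ≤ b) (hr : r < b) :
    ∑ m ∈ Finset.range (2*n*b),
      saw (((m*b+r : ℕ) : ℚ) / ((2*n*b*b : ℕ) : ℚ)) *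
      saw (((n*(2*n*b*b)+2*n*b+1 : ℕ) : ℚ) * ((m*b+r : ℕ) : ℚ) / ((2*n*b*b : ℕ) : ℚ))
    = (1/(2*(n:ℚ)*b^3) + (n:ℚ)/b) * (r:ℚ)^2 + (-(1/(2*(n:ℚ)*b^2)) - (n:ℚ)) * (r:ℚ)
      + ((2*(n:ℚ)*b-1)*(4*(n:ℚ)*b-1)/(12*(n:ℚ)*b) - (2*(n:ℚ)*b-1)/2 + (n:ℚ)*b/2)
      + (if r = 0 then (-(1:ℚ)/4) else 0) := by
  have hnQ : (0:ℚ) < n := by exact_mod_cast hn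
  have hbQ : (0:ℚ) < b := by exact_mod_cast hb
  have hnne : (n:ℚ) ≠ 0 := ne_of_gt hnQ
  have hbne : (b:ℚ) ≠ 0 := ne_of_gt hbQ
  rw [Finset.sum_congr rfl (fun m hm => term_eval n b m r hn hb (Finset.mem_range.1 hm) hr)]
  rw [Finset.sum_add_distrib, Finset.sum_sub_distrib]
  have e1 : ∀ m ∈ Finset.range (2*n*b),
      (((m:ℚ)*b+r)/(2*(n:ℚ)*b*b) - 1/2) * (((m:ℚ)*b+r)/(2*(n:ℚ)*b*b) + (r:ℚ)/b - 1/2)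
      = (1/(4*(n:ℚ)^2*b^2)) * (m:ℚ)^2
        + ((r:ℚ)/(2*(n:ℚ)^2*b^3) + ((r:ℚ)/b - 1)/(2*(n:ℚ)*b)) * (m:ℚ)
        + ((r:ℚ)^2/(4*(n:ℚ)^2*b^4) + ((r:ℚ)/b-1)*(r:ℚ)/(2*(n:ℚ)*b^2) - (r:ℚ)/(2*b) + 1/4) := by
    intro m _
    field_simp
    ring
  rw [Finset.sum_congr rfl e1, sum_quad]
  have hsub : 2*n*r ≤ 2*n*b := Nat.mul_le_mul_left (2*n) (le_of_lt hr)
  have e2 : ∀ j ∈ Finset.range (2*n*r),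
      ((((2*n*b - 2*n*r) + j : ℕ):ℚ)*b+r)/(2*(n:ℚ)*b*b) - 1/2
      = (0:ℚ) * (j:ℚ)^2 + (1/(2*(n:ℚ)*b)) * (j:ℚ)
        + (1/2 + (r:ℚ)/(2*(n:ℚ)*b^2) - (r:ℚ)/b) := by
    intro j _
    rw [Nat.cast_add, Nat.cast_sub hsub]
    push_cast
    field_simp
    ring
  have hS2 : (∑ m ∈ Finset.range (2*n*b),
      if 2*n*b - 2*n*r ≤ m then (((m:ℚ)*b+r)/(2*(n:ℚ)*b*b) - 1/2) else 0)
      = (0:ℚ) * (((2*n*r : ℕ):ℚ) * (((2*n*r : ℕ):ℚ) - 1) * (2 * ((2*n*r : ℕ):ℚ) - 1) / 6)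
        + (1/(2*(n:ℚ)*b)) * (((2*n*r : ℕ):ℚ) * (((2*n*r : ℕ):ℚ) - 1) / 2)
        + (1/2 + (r:ℚ)/(2*(n:ℚ)*b^2) - (r:ℚ)/b) * ((2*n*r : ℕ):ℚ) := by
    rw [← Finset.sum_filter, filter_le_range, Finset.sum_Ico_eq_sum_range,
      Nat.sub_sub_self hsub, Finset.sum_congr rfl e2, sum_quad]
  rw [hS2]
  have hS3 : (∑ m ∈ Finset.range (2*n*b), if m = 0 ∧ r = 0 then (-(1:ℚ)/4) else 0)
      = if r = 0 then (-(1:ℚ)/4) else 0 := by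
    by_cases hr0 : r = 0
    · subst hr0
      simp only [and_true, if_pos rfl]
      rw [Finset.sum_ite_eq' (Finset.range (2*n*b)) 0 (fun _ => (-(1:ℚ)/4))]
      rw [if_pos (Finset.mem_range.2 (Nat.mul_pos (Nat.mul_pos (by norm_num) hn) hb))]
      norm_num
    · simp [hr0]
  rw [hS3, add_left_inj]
  push_cast
  field_simp
  ring

theorem dedekind_sum_lens (n b : ℕ) (hn : 1 ≤ n) (hb : 1 ≤ b) :
    dedekindSum (2 * (n : ℤ) ^ 2 * (b : ℤ) ^ 2 + 2 * (n : ℤ) * (b : ℤ) + 1)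
        (2 * (n : ℤ) * (b : ℤ) ^ 2) =
      (2 * (n : ℚ) ^ 2 * (b : ℚ) ^ 2 - 3 * (n : ℚ) * (b : ℚ) ^ 2 + 1) /
        (12 * (n : ℚ) * (b : ℚ) ^ 2) := by
  have hq : (2 * (n : ℤ) * (b : ℤ) ^ 2) = ((2*n*b*b : ℕ) : ℤ) := by push_cast; ring
  have hp : (2 * (n : ℤ) ^ 2 * (b : ℤ) ^ 2 + 2 * (n : ℤ) * (b : ℤ) + 1)
      = ((n*(2*n*b*b)+2*n*b+1 : ℕ) : ℤ) := by push_cast; ring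
  have hqpos : 0 < 2*n*b*b := by
    have := Nat.mul_pos (Nat.mul_pos (Nat.mul_pos (by norm_num : 0 < 2) hn) hb) hb
    simpa [Nat.mul_assoc] using this
  rw [hq, hp, dedekindSum_eq_range _ _ hqpos]
  simp only [Int.cast_natCast]
  rw [sum_range_mul (fun i => saw ((i : ℚ) / ((2*n*b*b : ℕ) : ℚ)) *
      saw (((n*(2*n*b*b)+2*n*b+1 : ℕ) : ℚ) * (i : ℚ) / ((2*n*b*b : ℕ) : ℚ))) (2*n*b) b]
  rw [Finset.sum_comm]
  rw [Finset.sum_congr rfl (fun r hr => inner_eval n b r hn hb (Finset.mem_range.1 hr))]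
  rw [Finset.sum_add_distrib, sum_quad]
  rw [Finset.sum_ite_eq' (Finset.range b) 0 (fun _ => (-(1:ℚ)/4)),
    if_pos (Finset.mem_range.2 hb)]
  have hnQ : (0:ℚ) < n := by exact_mod_cast hn
  have hbQ : (0:ℚ) < b := by exact_mod_cast hb
  have hnne : (n:ℚ) ≠ 0 := ne_of_gt hnQ
  have hbne : (b:ℚ) ≠ 0 := ne_of_gt hbQ
  push_cast
  field_simp
  ring
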